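/- Let Q and Q' be alternating quivers with underlying Dynkin graphs and ε(i)=+1 for sources, -1 for sinks. For σ,σ' ∈ {+,-}, let μ_{σ,σ'} be the composition of mutations of Q□Q' at all vertices (i,i') with ε(i)=σ and ε(i')=σ' (there are no arrows between any two such vertices, so the order is irrelevant). Then μ_{+,+}∘μ_{-,-} transforms Q□Q' into its opposite quiver (Q□Q')^{op}, and likewise μ_{-,+}∘μ_{+,-} transforms Q□Q' into (Q□Q')^{op}. Consequently μ_□ = μ_{-,-}∘μ_{+,+}∘μ_{-,+}∘μ_{+,-} transforms Q□Q' into itself. -/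

import Mathlib

open scoped Classical

def isSource {V : Type*} (q : V → V → ℕ) (i : V) : Prop := ∀ j, q j i = 0

def isSink {V : Type*} (q : V → V → ℕ) (i : V) : Prop := ∀ j, q i j = 0

def Alternating {V : Type*} (q : V → V → ℕ) : Prop := ∀ i, isSource q i ∨ isSink q i

/-- Fomin–Zelevinsky quiver mutation at the vertex `k`. -/
noncomputable def quiverMutation {V : Type*} (q : V → V → ℕ) (k : V) : V → V → ℕ :=
  fun i j =>
    if i = k ∨ j = k then q j i
    else (q i j + q i k * q k j) - (q j i + q j k * q k i)

noncomputable def tensorProd {V V' : Type*} (q : V → V → ℕ) (q' : V' → V' → ℕ) :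
    V × V' → V × V' → ℕ :=
  fun p r => (if p.2 = r.2 then q p.1 r.1 else 0) + (if p.1 = r.1 then q' p.2 r.2 else 0)

noncomputable def squareProd {V V' : Type*} (q : V → V → ℕ) (q' : V' → V' → ℕ) :
    V × V' → V × V' → ℕ :=
  fun p r =>
    (if p.2 = r.2 then (if isSource q' p.2 then q r.1 p.1 else q p.1 r.1) else 0) +
      (if p.1 = r.1 then (if isSink q p.1 then q' r.2 p.2 else q' p.2 r.2) else 0)

/-- The underlying graph of a quiver given by arrow counts. -/
def symGraph {V : Type*} (q : V → V → ℕ) : SimpleGraph V where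
  Adj i j := i ≠ j ∧ 0 < q i j + q j i
  symm := by
    constructor
    intro i j h
    exact ⟨h.1.symm, by omega⟩
  loopless := ⟨fun i h => h.1 rfl⟩

/-- `ε(i) = +` if `i` is a source, `ε(i) = -` if `i` is a sink (`true` codes `+`). -/
def signClass {V : Type*} (q : V → V → ℕ) (i : V) (σ : Bool) : Prop :=
  isSource q i ↔ σ = true

/-- The set of vertices of `Q □ Q'` with `ε(i) = σ` and `ε(i') = σ'`. -/
def Mclass {V V' : Type*} (q : V → V → ℕ) (q' : V' → V' → ℕ) (σ σ' : Bool)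
    (p : V × V') : Prop :=
  signClass q p.1 σ ∧ signClass q' p.2 σ'

/-- `l` is an enumeration of the vertex class `M_{σ,σ'}`. -/
def Enum {V V' : Type*} (q : V → V → ℕ) (q' : V' → V' → ℕ) (σ σ' : Bool)
    (l : List (V × V')) : Prop :=
  l.Nodup ∧ ∀ p : V × V', p ∈ l ↔ Mclass q q' σ σ' p

set_option linter.unusedSectionVars false

namespace SqAux


noncomputable def mG {W : Type*} (B : W → W → ℕ) (med : W → W → W) (S : Set W) :
    W → W → ℕ := fun p r =>
  if p ∈ S ∨ r ∈ S then B r p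
  else (B p r + (if med p r ∈ S then B p (med p r) * B (med p r) r else 0))
    - (if med r p ∈ S then B r (med r p) * B (med r p) p else 0)

lemma mG_empty {W : Type*} (B : W → W → ℕ) (med : W → W → W) :
    mG B med (∅ : Set W) = B := by
  funext p r; simp [mG]

section Step
variable {W : Type*} {B : W → W → ℕ} {med : W → W → W} {P : Set W}
variable (hB0 : ∀ p, B p p = 0)
variable (hB2 : ∀ p r, B p r = 0 ∨ B r p = 0)
variable (hP : ∀ p ∈ P, ∀ r ∈ P, B p r = 0)
variable (hmed1 : ∀ p r : W, p ≠ med p r → r ≠ med p r → B p r = 0 ∧ B r p = 0)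
variable (hmed2 : ∀ p r : W, med p r = med r p → p = r)
variable (hpath : ∀ k ∈ P, ∀ p r : W, B p k ≠ 0 → B k r ≠ 0 → k = med p r)

include hB0 hB2 hP hmed1 hmed2 hpath in
lemma mG_step {S : Set W} (hSP : S ⊆ P) {k : W} (hk : k ∈ P) (hkS : k ∉ S) :
    quiverMutation (mG B med S) k = mG B med (insert k S) := by
  funext p r
  unfold quiverMutation
  have czero : ∀ a b : W, (a ∈ P ∨ b ∈ P) →
      (if med a b ∈ S then B a (med a b) * B (med a b) b else 0) = 0 := by
    intro a b hab
    split_ifs with h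
    · rcases hab with h2 | h2
      · rw [hP _ h2 _ (hSP h), zero_mul]
      · rw [hP _ (hSP h) _ h2, mul_zero]
    · rfl
  by_cases hor : p = k ∨ r = k
  · rw [if_pos hor]
    rcases hor with hh | hh
    · subst hh
      have hR : mG B med (insert p S) p r = B r p := by
        rw [mG, if_pos (Or.inl (Set.mem_insert p S))]
      rw [hR, mG]
      by_cases hS : r ∈ S ∨ p ∈ S
      · rw [if_pos hS]
        have hrS : r ∈ S := hS.resolve_right hkS
        rw [hP _ (hSP hrS) _ hk, hP _ hk _ (hSP hrS)]
      · rw [if_neg hS, czero r p (Or.inr hk), czero p r (Or.inl hk)]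
        omega
    · subst hh
      have hR : mG B med (insert r S) p r = B r p := by
        rw [mG, if_pos (Or.inr (Set.mem_insert r S))]
      rw [hR, mG]
      by_cases hS : r ∈ S ∨ p ∈ S
      · rw [if_pos hS]
        have hpS : p ∈ S := hS.resolve_left hkS
        rw [hP _ (hSP hpS) _ hk, hP _ hk _ (hSP hpS)]
      · rw [if_neg hS, czero r p (Or.inl hk), czero p r (Or.inr hk)]
        omega
  · push_neg at hor
    obtain ⟨hpk, hrk⟩ := hor
    rw [if_neg (by tauto)]
    by_cases hpS : p ∈ S <;> by_cases hrS : r ∈ S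
    · have hPp := hSP hpS; have hPr := hSP hrS
      have e1 : mG B med S p r = 0 := by rw [mG, if_pos (Or.inl hpS), hP _ hPr _ hPp]
      have e2 : mG B med S r p = 0 := by rw [mG, if_pos (Or.inl hrS), hP _ hPp _ hPr]
      have e3 : mG B med S p k = 0 := by rw [mG, if_pos (Or.inl hpS), hP _ hk _ hPp]
      have e4 : mG B med S r k = 0 := by rw [mG, if_pos (Or.inl hrS), hP _ hk _ hPr]
      have e5 : mG B med (insert k S) p r = 0 := by
        rw [mG, if_pos (Or.inl (Set.mem_insert_of_mem _ hpS)), hP _ hPr _ hPp]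
      rw [e1, e2, e3, e4, e5]
      simp
    · have hPp := hSP hpS
      have e1 : mG B med S p r = B r p := by rw [mG, if_pos (Or.inl hpS)]
      have e2 : mG B med S r p = B p r := by rw [mG, if_pos (Or.inr hpS)]
      have e3 : mG B med S p k = 0 := by rw [mG, if_pos (Or.inl hpS), hP _ hk _ hPp]
      have e4 : mG B med S k p = 0 := by rw [mG, if_pos (Or.inr hpS), hP _ hPp _ hk]
      have e5 : mG B med (insert k S) p r = B r p := by
        rw [mG, if_pos (Or.inl (Set.mem_insert_of_mem _ hpS))]
      rw [e1, e2, e3, e4, e5]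
      rcases hB2 p r with h | h <;> rw [h] <;> simp
    · have hPr := hSP hrS
      have e1 : mG B med S p r = B r p := by rw [mG, if_pos (Or.inr hrS)]
      have e2 : mG B med S r p = B p r := by rw [mG, if_pos (Or.inl hrS)]
      have e3 : mG B med S k r = 0 := by rw [mG, if_pos (Or.inr hrS), hP _ hPr _ hk]
      have e4 : mG B med S r k = 0 := by rw [mG, if_pos (Or.inl hrS), hP _ hk _ hPr]
      have e5 : mG B med (insert k S) p r = B r p := by
        rw [mG, if_pos (Or.inr (Set.mem_insert_of_mem _ hrS))]
      rw [e1, e2, e3, e4, e5]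
      rcases hB2 p r with h | h <;> rw [h] <;> simp
    · -- p, r ∉ S
      have hnot : ¬(p ∈ S ∨ r ∈ S) := by tauto
      have hnot' : ¬(r ∈ S ∨ p ∈ S) := by tauto
      have hnotT : ¬(p ∈ insert k S ∨ r ∈ insert k S) := by
        simp only [Set.mem_insert_iff]; tauto
      have Gpk : mG B med S p k = B p k := by
        rw [mG, if_neg (by tauto), czero p k (Or.inr hk), czero k p (Or.inl hk)]; omega
      have Gkp : mG B med S k p = B k p := by
        rw [mG, if_neg (by tauto), czero k p (Or.inl hk), czero p k (Or.inr hk)]; omega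
      have Gkr : mG B med S k r = B k r := by
        rw [mG, if_neg (by tauto), czero k r (Or.inl hk), czero r k (Or.inr hk)]; omega
      have Grk : mG B med S r k = B r k := by
        rw [mG, if_neg (by tauto), czero r k (Or.inr hk), czero k r (Or.inl hk)]; omega
      rw [Gpk, Gkr, Grk, Gkp]
      rw [mG, if_neg hnot]
      rw [mG, if_neg hnot']
      rw [mG, if_neg hnotT]
      by_cases hpr : p = r
      · subst hpr
        rw [hB0 p]
        omega
      · have Fu : B p k * B k r ≠ 0 → k = med p r := fun h =>
          hpath k hk p r (fun e => h (by rw [e, zero_mul]))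
            (fun e => h (by rw [e, mul_zero]))
        have Fv : B r k * B k p ≠ 0 → k = med r p := fun h =>
          hpath k hk r p (fun e => h (by rw [e, zero_mul]))
            (fun e => h (by rw [e, mul_zero]))
        have Fzu : B p k * B k r ≠ 0 → B p r = 0 ∧ B r p = 0 := fun h =>
          hmed1 p r (Fu h ▸ hpk) (Fu h ▸ hrk)
        have Fzv : B r k * B k p ≠ 0 → B p r = 0 ∧ B r p = 0 := fun h =>
          (hmed1 r p (Fv h ▸ hrk) (Fv h ▸ hpk)).symm
        have Fm1 : med p r ∈ S → B p r = 0 ∧ B r p = 0 := fun h =>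
          hmed1 p r (fun e => hpS (e ▸ h)) (fun e => hrS (e ▸ h))
        have Fm2 : med r p ∈ S → B p r = 0 ∧ B r p = 0 := fun h =>
          (hmed1 r p (fun e => hrS (e ▸ h)) (fun e => hpS (e ▸ h))).symm
        have Fab := hB2 p r
        by_cases hm1 : med p r ∈ S <;> by_cases hm2 : med r p ∈ S
        · have hu : B p k * B k r = 0 := by
            by_contra h; exact hkS ((Fu h) ▸ hm1)
          have hv : B r k * B k p = 0 := by
            by_contra h; exact hkS ((Fv h) ▸ hm2)
          rw [if_pos hm1, if_pos hm2, if_pos (Set.mem_insert_of_mem k hm1),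
            if_pos (Set.mem_insert_of_mem k hm2), hu, hv]
          have := Fm1 hm1
          omega
        · have hu : B p k * B k r = 0 := by
            by_contra h; exact hkS ((Fu h) ▸ hm1)
          rw [if_pos hm1, if_neg hm2, if_pos (Set.mem_insert_of_mem k hm1), hu]
          have hab := Fm1 hm1
          by_cases hc2 : med r p = k
          · rw [hc2, if_pos (Set.mem_insert k S)]
            omega
          · rw [if_neg (fun h => (Set.mem_insert_iff.mp h).elim hc2 hm2)]
            have hv : B r k * B k p = 0 := by
              by_contra h; exact hc2 (Fv h).symm
            rw [hv]
            omega
        · have hv : B r k * B k p = 0 := by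
            by_contra h; exact hkS ((Fv h) ▸ hm2)
          rw [if_neg hm1, if_pos hm2, if_pos (Set.mem_insert_of_mem k hm2), hv]
          have hab := Fm2 hm2
          by_cases hc1 : med p r = k
          · rw [hc1, if_pos (Set.mem_insert k S)]
            omega
          · rw [if_neg (fun h => (Set.mem_insert_iff.mp h).elim hc1 hm1)]
            have hu : B p k * B k r = 0 := by
              by_contra h; exact hc1 (Fu h).symm
            rw [hu]
            omega
        · rw [if_neg hm1, if_neg hm2]
          by_cases hc1 : med p r = k <;> by_cases hc2 : med r p = k
          · exact absurd (hmed2 p r (hc1.trans hc2.symm)) hpr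
          · rw [hc1, if_pos (Set.mem_insert k S),
              if_neg (fun h => (Set.mem_insert_iff.mp h).elim hc2 hm2)]
            have hv : B r k * B k p = 0 := by
              by_contra h; exact hc2 (Fv h).symm
            rw [hv]
            by_cases hu0 : B p k * B k r = 0
            · rw [hu0]; omega
            · obtain ⟨h1, h2⟩ := Fzu hu0; omega
          · rw [hc2, if_pos (Set.mem_insert k S),
              if_neg (fun h => (Set.mem_insert_iff.mp h).elim hc1 hm1)]
            have hu : B p k * B k r = 0 := by
              by_contra h; exact hc1 (Fu h).symm
            rw [hu]
            by_cases hv0 : B r k * B k p = 0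
            · rw [hv0]; omega
            · obtain ⟨h1, h2⟩ := Fzv hv0; omega
          · rw [if_neg (fun h => (Set.mem_insert_iff.mp h).elim hc1 hm1),
              if_neg (fun h => (Set.mem_insert_iff.mp h).elim hc2 hm2)]
            have hu : B p k * B k r = 0 := by
              by_contra h; exact hc1 (Fu h).symm
            have hv : B r k * B k p = 0 := by
              by_contra h; exact hc2 (Fv h).symm
            rw [hu, hv]
            omega

include hB0 hB2 hP hmed1 hmed2 hpath in
lemma mG_fold : ∀ (l : List W), l.Nodup → (∀ x ∈ l, x ∈ P) →
    ∀ S : Set W, S ⊆ P → (∀ x ∈ l, x ∉ S) →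
    l.foldl quiverMutation (mG B med S) = mG B med (S ∪ {x | x ∈ l}) := by
  intro l
  induction l with
  | nil =>
    intro _ _ S hSP _
    simp only [List.foldl_nil]
    have hset : S ∪ {x | x ∈ ([] : List W)} = S := by
      ext z; simp
    rw [hset]
  | cons a l ih =>
    intro hnd hlP S hSP hlS
    have haP : a ∈ P := hlP a List.mem_cons_self
    have haS : a ∉ S := hlS a List.mem_cons_self
    simp only [List.foldl_cons]
    rw [mG_step hB0 hB2 hP hmed1 hmed2 hpath hSP haP haS]
    rw [ih (List.Nodup.of_cons hnd) (fun x hx => hlP x (List.mem_cons_of_mem a hx))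
      (insert a S) (Set.insert_subset haP hSP)
      (fun x hx => by
        intro hxm
        rcases Set.mem_insert_iff.mp hxm with h | h
        · exact (List.nodup_cons.mp hnd).1 (h ▸ hx)
        · exact hlS x (List.mem_cons_of_mem a hx) h)]
    have hset : insert a S ∪ {x | x ∈ l} = S ∪ {x | x ∈ a :: l} := by
      ext z
      simp only [Set.mem_union, Set.mem_insert_iff, Set.mem_setOf_eq, List.mem_cons]
      tauto
    rw [hset]

end Step

lemma mut_op {W : Type*} (F : W → W → ℕ) (k : W) :
    quiverMutation (fun a b => F b a) k = fun a b => quiverMutation F k b a := by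
  funext a b
  unfold quiverMutation
  by_cases h : a = k ∨ b = k
  · rw [if_pos h, if_pos (h.symm)]
  · rw [if_neg h, if_neg (fun hh => h hh.symm)]
    ring_nf

lemma foldl_op {W : Type*} (l : List W) (F : W → W → ℕ) :
    l.foldl quiverMutation (fun a b => F b a) = fun a b => l.foldl quiverMutation F b a := by
  induction l generalizing F with
  | nil => rfl
  | cons a l ih =>
    simp only [List.foldl_cons, mut_op]
    exact ih (quiverMutation F a)




section Specific
variable {V V' : Type*} {q : V → V → ℕ} {q' : V' → V' → ℕ}
variable (hq0 : ∀ i, q i i = 0) (hq'0 : ∀ i, q' i i = 0)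
variable (hqa : Alternating q) (hq'a : Alternating q')

include hqa in
lemma q_sign {a b : V} (h : q a b ≠ 0) : isSource q a ∧ ¬ isSource q b :=
  ⟨(hqa a).resolve_right (fun hs => h (hs b)), fun hs => h (hs a)⟩

include hqa in
lemma q_zero_of_iff {a b : V} (h : isSource q a ↔ isSource q b) : q a b = 0 := by
  by_contra hne
  obtain ⟨h1, h2⟩ := q_sign hqa hne
  exact h2 (h.mp h1)

include hqa in
lemma q_nocyc {a b : V} (h : q a b ≠ 0) : q b a = 0 := by
  by_contra h2
  exact (q_sign hqa h).2 (q_sign hqa h2).1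

lemma sq_elim {p r : V × V'} (h : squareProd q q' p r ≠ 0) :
    (p.2 = r.2 ∧ (if isSource q' p.2 then q r.1 p.1 else q p.1 r.1) ≠ 0) ∨
    (p.1 = r.1 ∧ (if isSink q p.1 then q' r.2 p.2 else q' p.2 r.2) ≠ 0) := by
  unfold squareProd at h
  by_cases h2 : p.2 = r.2 <;> by_cases h1 : p.1 = r.1
  · rw [if_pos h2, if_pos h1] at h
    by_cases hc : (if isSource q' p.2 then q r.1 p.1 else q p.1 r.1) = 0
    · exact Or.inr ⟨h1, fun hh => h (by rw [hc, hh])⟩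
    · exact Or.inl ⟨h2, hc⟩
  · rw [if_pos h2, if_neg h1] at h
    exact Or.inl ⟨h2, fun hh => h (by rw [hh])⟩
  · rw [if_neg h2, if_pos h1] at h
    exact Or.inr ⟨h1, fun hh => h (by rw [hh])⟩
  · rw [if_neg h2, if_neg h1] at h
    exact absurd rfl h

lemma sq_col {p r : V × V'} (h2 : p.2 = r.2) (h1 : p.1 ≠ r.1) :
    squareProd q q' p r = if isSource q' p.2 then q r.1 p.1 else q p.1 r.1 := by
  unfold squareProd
  rw [if_pos h2, if_neg h1, add_zero]

lemma sq_row {p r : V × V'} (h1 : p.1 = r.1) (h2 : p.2 ≠ r.2) :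
    squareProd q q' p r = if isSink q p.1 then q' r.2 p.2 else q' p.2 r.2 := by
  unfold squareProd
  rw [if_pos h1, if_neg h2, zero_add]

include hq0 hq'0 in
lemma sq_diag (p : V × V') : squareProd q q' p p = 0 := by
  unfold squareProd
  split_ifs <;> simp [hq0, hq'0]

include hq0 hq'0 hqa hq'a in
lemma sq_nocyc (p r : V × V') : squareProd q q' p r = 0 ∨ squareProd q q' r p = 0 := by
  by_contra hc
  push_neg at hc
  obtain ⟨ha, hb⟩ := hc
  rcases sq_elim ha with ⟨e2, t1⟩ | ⟨e1, t1⟩ <;> rcases sq_elim hb with ⟨f2, t2⟩ | ⟨f1, t2⟩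
  · rw [← e2] at t2
    by_cases hs : isSource q' p.2
    · rw [if_pos hs] at t1 t2
      exact t2 (q_nocyc hqa t1)
    · rw [if_neg hs] at t1 t2
      exact t2 (q_nocyc hqa t1)
  · have hpr : p = r := Prod.ext (f1.symm) e2
    rw [hpr] at ha
    exact ha (sq_diag hq0 hq'0 r)
  · have hpr : p = r := Prod.ext e1 (f2.symm)
    rw [hpr] at ha
    exact ha (sq_diag hq0 hq'0 r)
  · rw [← e1] at t2
    by_cases hs : isSink q p.1
    · rw [if_pos hs] at t1 t2
      exact t2 (q_nocyc hq'a t1)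
    · rw [if_neg hs] at t1 t2
      exact t2 (q_nocyc hq'a t1)

include hqa hq'a in
lemma sq_same {p r : V × V'} (h1 : p.2 = r.2 → (isSource q p.1 ↔ isSource q r.1))
    (h2 : p.1 = r.1 → (isSource q' p.2 ↔ isSource q' r.2)) :
    squareProd q q' p r = 0 := by
  by_contra h
  rcases sq_elim h with ⟨e, t⟩ | ⟨e, t⟩
  · have hiff := h1 e
    by_cases hs : isSource q' p.2
    · rw [if_pos hs] at t
      exact t (q_zero_of_iff hqa hiff.symm)
    · rw [if_neg hs] at t
      exact t (q_zero_of_iff hqa hiff)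
  · have hiff := h2 e
    by_cases hs : isSink q p.1
    · rw [if_pos hs] at t
      exact t (q_zero_of_iff hq'a hiff.symm)
    · rw [if_neg hs] at t
      exact t (q_zero_of_iff hq'a hiff)

include hqa hq'a in
lemma sq_sign {p r : V × V'} (h : squareProd q q' p r ≠ 0) :
    ((isSource q p.1 ↔ ¬ isSource q r.1) ∧ (isSource q' p.2 ↔ isSource q' r.2)) ∨
    ((isSource q p.1 ↔ isSource q r.1) ∧ (isSource q' p.2 ↔ ¬ isSource q' r.2)) := by
  rcases sq_elim h with ⟨e, t⟩ | ⟨e, t⟩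
  · left
    refine ⟨?_, by rw [e]⟩
    by_cases hs : isSource q' p.2
    · rw [if_pos hs] at t
      obtain ⟨u1, u2⟩ := q_sign hqa t
      tauto
    · rw [if_neg hs] at t
      obtain ⟨u1, u2⟩ := q_sign hqa t
      tauto
  · right
    refine ⟨by rw [e], ?_⟩
    by_cases hs : isSink q p.1
    · rw [if_pos hs] at t
      obtain ⟨u1, u2⟩ := q_sign hq'a t
      tauto
    · rw [if_neg hs] at t
      obtain ⟨u1, u2⟩ := q_sign hq'a t
      tauto

include hqa hq'a in
lemma sq_pathA {k p r : V × V'} (hk : isSource q k.1 ↔ isSource q' k.2)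
    (h1 : squareProd q q' p k ≠ 0) (h2 : squareProd q q' k r ≠ 0) :
    k = (r.1, p.2) := by
  rcases sq_elim h2 with ⟨e2, t2⟩ | ⟨e1, t2⟩
  · exfalso
    by_cases hs : isSource q' k.2
    · rw [if_pos hs] at t2
      exact (q_sign hqa t2).2 (hk.mpr hs)
    · rw [if_neg hs] at t2
      exact hs (hk.mp (q_sign hqa t2).1)
  · rcases sq_elim h1 with ⟨f2, t1⟩ | ⟨f1, t1⟩
    · exact Prod.ext e1 f2.symm
    · exfalso
      rw [f1] at t1
      by_cases hsink : isSink q k.1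
      · rw [if_pos hsink] at t1 t2
        exact (q_sign hq'a t2).2 (q_sign hq'a t1).1
      · rw [if_neg hsink] at t1
        have hns' : ¬ isSource q' k.2 := (q_sign hq'a t1).2
        exact hsink ((hqa k.1).resolve_left (fun hsrc => hns' (hk.mp hsrc)))

include hqa hq'a in
lemma sq_pathB {k p r : V × V'} (hk : isSource q k.1 ↔ ¬ isSource q' k.2)
    (h1 : squareProd q q' p k ≠ 0) (h2 : squareProd q q' k r ≠ 0) :
    k = (p.1, r.2) := by
  rcases sq_elim h1 with ⟨e2, t1⟩ | ⟨e1, t1⟩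
  · exfalso
    rw [e2] at t1
    by_cases hs : isSource q' k.2
    · rw [if_pos hs] at t1
      exact (hk.mp (q_sign hqa t1).1) hs
    · rw [if_neg hs] at t1
      exact (q_sign hqa t1).2 (hk.mpr hs)
  · rcases sq_elim h2 with ⟨f2, t2⟩ | ⟨f1, t2⟩
    · exact Prod.ext e1.symm f2
    · exfalso
      rw [e1] at t1
      by_cases hsink : isSink q k.1
      · rw [if_pos hsink] at t1 t2
        exact (q_sign hq'a t2).2 (q_sign hq'a t1).1
      · rw [if_neg hsink] at t2
        have hs' : isSource q' k.2 := (q_sign hq'a t2).1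
        exact hsink ((hqa k.1).resolve_left (fun hsrc => (hk.mp hsrc) hs'))

lemma sq_medA1 {p r : V × V'} (h1 : p ≠ ((r.1, p.2) : V × V'))
    (h2 : r ≠ ((r.1, p.2) : V × V')) :
    squareProd q q' p r = 0 ∧ squareProd q q' r p = 0 := by
  have e1 : p.1 ≠ r.1 := fun e => h1 (Prod.ext e rfl)
  have e2 : p.2 ≠ r.2 := fun e => h2 (Prod.ext rfl e.symm)
  constructor
  · unfold squareProd
    rw [if_neg e2, if_neg e1]
  · unfold squareProd
    rw [if_neg (Ne.symm e2), if_neg (Ne.symm e1)]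

lemma sq_medB1 {p r : V × V'} (h1 : p ≠ ((p.1, r.2) : V × V'))
    (h2 : r ≠ ((p.1, r.2) : V × V')) :
    squareProd q q' p r = 0 ∧ squareProd q q' r p = 0 := by
  have e2 : p.2 ≠ r.2 := fun e => h1 (Prod.ext rfl e)
  have e1 : p.1 ≠ r.1 := fun e => h2 (Prod.ext e.symm rfl)
  constructor
  · unfold squareProd
    rw [if_neg e2, if_neg e1]
  · unfold squareProd
    rw [if_neg (Ne.symm e2), if_neg (Ne.symm e1)]


include hq0 hq'0 hqa hq'a in
lemma GA_full :
    mG (squareProd q q') (fun p r => ((r.1, p.2) : V × V'))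
      {p : V × V' | isSource q p.1 ↔ isSource q' p.2} =
      fun p r => squareProd q q' r p := by
  funext p r
  simp only [mG]
  by_cases hor : p ∈ {p : V × V' | isSource q p.1 ↔ isSource q' p.2} ∨
      r ∈ {p : V × V' | isSource q p.1 ↔ isSource q' p.2}
  · rw [if_pos hor]
  · rw [if_neg hor]
    have hp' : ¬ (isSource q p.1 ↔ isSource q' p.2) := fun h => hor (Or.inl h)
    have hr' : ¬ (isSource q r.1 ↔ isSource q' r.2) := fun h => hor (Or.inr h)
    have hBpr : squareProd q q' p r = 0 := by
      by_contra h
      rcases sq_sign hqa hq'a h with ⟨h1, h2⟩ | ⟨h1, h2⟩ <;> tauto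
    have hBrp : squareProd q q' r p = 0 := by
      by_contra h
      rcases sq_sign hqa hq'a h with ⟨h1, h2⟩ | ⟨h1, h2⟩ <;> tauto
    rw [hBpr, hBrp]
    by_cases hm : ((r.1, p.2) : V × V') ∈ {p : V × V' | isSource q p.1 ↔ isSource q' p.2}
    · have hm' : isSource q r.1 ↔ isSource q' p.2 := hm
      have hne1 : p.1 ≠ r.1 := by
        intro e
        exact hp' (by rw [e]; exact hm')
      have hne2 : p.2 ≠ r.2 := by
        intro e
        exact hr' (by rw [← e]; exact hm')
      have hcond : ((p.1, r.2) : V × V') ∈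
          {p : V × V' | isSource q p.1 ↔ isSource q' p.2} := by
        show isSource q p.1 ↔ isSource q' r.2
        tauto
      rw [if_pos hm, if_pos hcond]
      have v1 : squareProd q q' p ((r.1, p.2) : V × V')
          = if isSource q' p.2 then q r.1 p.1 else q p.1 r.1 := sq_col rfl hne1
      have v2 : squareProd q q' ((r.1, p.2) : V × V') r
          = if isSink q r.1 then q' r.2 p.2 else q' p.2 r.2 := sq_row rfl hne2
      have v3 : squareProd q q' r ((p.1, r.2) : V × V')
          = if isSource q' r.2 then q p.1 r.1 else q r.1 p.1 := sq_col rfl (Ne.symm hne1)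
      have v4 : squareProd q q' ((p.1, r.2) : V × V') p
          = if isSink q p.1 then q' p.2 r.2 else q' r.2 p.2 := sq_row rfl (Ne.symm hne2)
      rw [v1, v2, v3, v4]
      by_cases hs : isSource q' p.2
      · have h1 : isSource q r.1 := hm'.mpr hs
        have h2 : ¬ isSource q p.1 := by tauto
        have h3 : ¬ isSource q' r.2 := by tauto
        have hsink : isSink q p.1 := (hqa p.1).resolve_left h2
        rw [if_pos hs, if_neg h3, if_pos hsink]
        by_cases hk : isSink q r.1
        · rw [if_pos hk, hk p.1]
          simp
        · rw [if_neg hk]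
          omega
      · have h1 : ¬ isSource q r.1 := fun hh => hs (hm'.mp hh)
        have h2 : isSource q p.1 := by tauto
        have h3 : isSource q' r.2 := by tauto
        have hsink : isSink q r.1 := (hqa r.1).resolve_left h1
        rw [if_neg hs, if_pos h3, if_pos hsink]
        by_cases hk : isSink q p.1
        · rw [if_pos hk, hk r.1]
          simp
        · rw [if_neg hk]
          omega
    · have hcond : ¬ (((p.1, r.2) : V × V') ∈
          {p : V × V' | isSource q p.1 ↔ isSource q' p.2}) := by
        intro h
        have h' : isSource q p.1 ↔ isSource q' r.2 := h
        exact hm (show isSource q r.1 ↔ isSource q' p.2 by tauto)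
      rw [if_neg hm, if_neg hcond]

include hq0 hq'0 hqa hq'a in
lemma GB_full :
    mG (squareProd q q') (fun p r => ((p.1, r.2) : V × V'))
      {p : V × V' | isSource q p.1 ↔ ¬ isSource q' p.2} =
      fun p r => squareProd q q' r p := by
  funext p r
  simp only [mG]
  by_cases hor : p ∈ {p : V × V' | isSource q p.1 ↔ ¬ isSource q' p.2} ∨
      r ∈ {p : V × V' | isSource q p.1 ↔ ¬ isSource q' p.2}
  · rw [if_pos hor]
  · rw [if_neg hor]
    have hp' : ¬ (isSource q p.1 ↔ ¬ isSource q' p.2) := fun h => hor (Or.inl h)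
    have hr' : ¬ (isSource q r.1 ↔ ¬ isSource q' r.2) := fun h => hor (Or.inr h)
    have hBpr : squareProd q q' p r = 0 := by
      by_contra h
      rcases sq_sign hqa hq'a h with ⟨h1, h2⟩ | ⟨h1, h2⟩ <;> tauto
    have hBrp : squareProd q q' r p = 0 := by
      by_contra h
      rcases sq_sign hqa hq'a h with ⟨h1, h2⟩ | ⟨h1, h2⟩ <;> tauto
    rw [hBpr, hBrp]
    by_cases hm : ((p.1, r.2) : V × V') ∈
        {p : V × V' | isSource q p.1 ↔ ¬ isSource q' p.2}
    · have hm' : isSource q p.1 ↔ ¬ isSource q' r.2 := hm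
      have hne2 : p.2 ≠ r.2 := by
        intro e
        exact hp' (by rw [e]; exact hm')
      have hne1 : p.1 ≠ r.1 := by
        intro e
        exact hr' (by rw [← e]; exact hm')
      have hcond : ((r.1, p.2) : V × V') ∈
          {p : V × V' | isSource q p.1 ↔ ¬ isSource q' p.2} := by
        show isSource q r.1 ↔ ¬ isSource q' p.2
        tauto
      rw [if_pos hm, if_pos hcond]
      have v1 : squareProd q q' p ((p.1, r.2) : V × V')
          = if isSink q p.1 then q' r.2 p.2 else q' p.2 r.2 := sq_row rfl hne2
      have v2 : squareProd q q' ((p.1, r.2) : V × V') r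
          = if isSource q' r.2 then q r.1 p.1 else q p.1 r.1 := sq_col rfl hne1
      have v3 : squareProd q q' r ((r.1, p.2) : V × V')
          = if isSink q r.1 then q' p.2 r.2 else q' r.2 p.2 := sq_row rfl (Ne.symm hne2)
      have v4 : squareProd q q' ((r.1, p.2) : V × V') p
          = if isSource q' p.2 then q p.1 r.1 else q r.1 p.1 := sq_col rfl (Ne.symm hne1)
      rw [v1, v2, v3, v4]
      by_cases hs : isSource q' r.2
      · have h2 : ¬ isSource q p.1 := fun hh => (hm'.mp hh) hs
        have h3 : ¬ isSource q' p.2 := by tauto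
        have h1 : isSource q r.1 := by tauto
        have hsink : isSink q p.1 := (hqa p.1).resolve_left h2
        rw [if_pos hs, if_neg h3, if_pos hsink]
        by_cases hk : isSink q r.1
        · rw [if_pos hk, hk p.1]
          simp
        · rw [if_neg hk]
          omega
      · have h2 : isSource q p.1 := by tauto
        have h3 : isSource q' p.2 := by tauto
        have h1 : ¬ isSource q r.1 := by tauto
        have hsink : isSink q r.1 := (hqa r.1).resolve_left h1
        rw [if_neg hs, if_pos h3, if_pos hsink]
        by_cases hk : isSink q p.1
        · rw [if_pos hk, hk r.1]
          simp
        · rw [if_neg hk]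
          omega
    · have hcond : ¬ (((r.1, p.2) : V × V') ∈
          {p : V × V' | isSource q p.1 ↔ ¬ isSource q' p.2}) := by
        intro h
        have h' : isSource q r.1 ↔ ¬ isSource q' p.2 := h
        exact hm (show isSource q p.1 ↔ ¬ isSource q' r.2 by tauto)
      rw [if_neg hm, if_neg hcond]

end Specific

end SqAux

set_option maxHeartbeats 1000000 in
open SqAux in
/-- For alternating quivers `Q`, `Q'` with underlying Dynkin (tree-shaped, simply
laced) graphs: `μ_{+,+} ∘ μ_{-,-}` and `μ_{-,+} ∘ μ_{+,-}` transform `Q □ Q'` into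
the opposite quiver `(Q □ Q')^{op}`, and consequently
`μ_□ = μ_{-,-} ∘ μ_{+,+} ∘ μ_{-,+} ∘ μ_{+,-}` transforms `Q □ Q'` into itself.
(Composition `μ_{σ,σ'}` is realized by folding quiver mutation over any enumeration
of the class `M_{σ,σ'}`; there are no arrows between two vertices of one class, so
the order is irrelevant.) -/
theorem squareProd_mu_square {V V' : Type*} [Fintype V] [Fintype V']
    (q : V → V → ℕ) (q' : V' → V' → ℕ)
    (hq0 : ∀ i, q i i = 0) (hq'0 : ∀ i', q' i' i' = 0)
    (hq1 : ∀ i j, q i j ≤ 1) (hq'1 : ∀ i' j', q' i' j' ≤ 1)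
    (htree : (symGraph q).IsTree) (htree' : (symGraph q').IsTree)
    (hq : Alternating q) (hq' : Alternating q') :
    (∀ lmm lpp, Enum q q' false false lmm → Enum q q' true true lpp →
        lpp.foldl quiverMutation (lmm.foldl quiverMutation (squareProd q q')) =
          fun p r => squareProd q q' r p) ∧
      (∀ lpm lmp, Enum q q' true false lpm → Enum q q' false true lmp →
        lmp.foldl quiverMutation (lpm.foldl quiverMutation (squareProd q q')) =
          fun p r => squareProd q q' r p) ∧
      (∀ lpm lmp lpp lmm, Enum q q' true false lpm → Enum q q' false true lmp →
        Enum q q' true true lpp → Enum q q' false false lmm →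
        lmm.foldl quiverMutation (lpp.foldl quiverMutation
          (lmp.foldl quiverMutation (lpm.foldl quiverMutation (squareProd q q')))) =
          squareProd q q') := by
  classical
  have hB0 : ∀ p : V × V', squareProd q q' p p = 0 := sq_diag hq0 hq'0
  have hB2 : ∀ p r : V × V', squareProd q q' p r = 0 ∨ squareProd q q' r p = 0 :=
    sq_nocyc hq0 hq'0 hq hq'
  have hPA : ∀ p ∈ {p : V × V' | isSource q p.1 ↔ isSource q' p.2},
      ∀ r ∈ {p : V × V' | isSource q p.1 ↔ isSource q' p.2}, squareProd q q' p r = 0 := by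
    intro p hp r hr
    have hp' : isSource q p.1 ↔ isSource q' p.2 := hp
    have hr' : isSource q r.1 ↔ isSource q' r.2 := hr
    refine sq_same hq hq' (fun e => ?_) (fun e => ?_)
    · have h2 : isSource q' p.2 ↔ isSource q' r.2 := by rw [e]
      tauto
    · have h2 : isSource q p.1 ↔ isSource q r.1 := by rw [e]
      tauto
  have hPB : ∀ p ∈ {p : V × V' | isSource q p.1 ↔ ¬ isSource q' p.2},
      ∀ r ∈ {p : V × V' | isSource q p.1 ↔ ¬ isSource q' p.2}, squareProd q q' p r = 0 := by
    intro p hp r hr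
    have hp' : isSource q p.1 ↔ ¬ isSource q' p.2 := hp
    have hr' : isSource q r.1 ↔ ¬ isSource q' r.2 := hr
    refine sq_same hq hq' (fun e => ?_) (fun e => ?_)
    · have h2 : isSource q' p.2 ↔ isSource q' r.2 := by rw [e]
      tauto
    · have h2 : isSource q p.1 ↔ isSource q r.1 := by rw [e]
      tauto
  have hmed1A : ∀ p r : V × V', p ≠ ((r.1, p.2) : V × V') → r ≠ ((r.1, p.2) : V × V') →
      squareProd q q' p r = 0 ∧ squareProd q q' r p = 0 := fun p r h1 h2 => sq_medA1 h1 h2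
  have hmed1B : ∀ p r : V × V', p ≠ ((p.1, r.2) : V × V') → r ≠ ((p.1, r.2) : V × V') →
      squareProd q q' p r = 0 ∧ squareProd q q' r p = 0 := fun p r h1 h2 => sq_medB1 h1 h2
  have hmed2A : ∀ p r : V × V', ((r.1, p.2) : V × V') = ((p.1, r.2) : V × V') → p = r := by
    intro p r h
    injection h with e1 e2
    exact Prod.ext e1.symm e2
  have hmed2B : ∀ p r : V × V', ((p.1, r.2) : V × V') = ((r.1, p.2) : V × V') → p = r := by
    intro p r h
    injection h with e1 e2
    exact Prod.ext e1 e2.symm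
  have hpathA : ∀ k ∈ {p : V × V' | isSource q p.1 ↔ isSource q' p.2},
      ∀ p r : V × V', squareProd q q' p k ≠ 0 → squareProd q q' k r ≠ 0 →
      k = ((r.1, p.2) : V × V') := fun k hk p r h1 h2 => sq_pathA hq hq' hk h1 h2
  have hpathB : ∀ k ∈ {p : V × V' | isSource q p.1 ↔ ¬ isSource q' p.2},
      ∀ p r : V × V', squareProd q q' p k ≠ 0 → squareProd q q' k r ≠ 0 →
      k = ((p.1, r.2) : V × V') := fun k hk p r h1 h2 => sq_pathB hq hq' hk h1 h2
  have stageA : ∀ l1 l2 : List (V × V'), l1.Nodup → l2.Nodup →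
      (∀ x ∈ l1, (isSource q x.1 ↔ isSource q' x.2)) →
      (∀ x ∈ l2, (isSource q x.1 ↔ isSource q' x.2)) →
      (∀ x ∈ l2, x ∉ l1) →
      ({x | x ∈ l1} ∪ {x | x ∈ l2} : Set (V × V')) =
        {p : V × V' | isSource q p.1 ↔ isSource q' p.2} →
      l2.foldl quiverMutation (l1.foldl quiverMutation (squareProd q q')) =
        fun p r => squareProd q q' r p := by
    intro l1 l2 nd1 nd2 m1 m2 dis hun
    have e1 : l1.foldl quiverMutation (squareProd q q') =
        mG (squareProd q q') (fun p r => ((r.1, p.2) : V × V'))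
          ((∅ : Set (V × V')) ∪ {x | x ∈ l1}) := by
      conv_lhs => rw [← mG_empty (squareProd q q') (fun p r => ((r.1, p.2) : V × V'))]
      exact mG_fold hB0 hB2 hPA hmed1A hmed2A hpathA l1 nd1 (fun x hx => m1 x hx) ∅
        (Set.empty_subset _) (fun x _ h => h)
    rw [e1, Set.empty_union]
    rw [mG_fold hB0 hB2 hPA hmed1A hmed2A hpathA l2 nd2 (fun x hx => m2 x hx)
      {x | x ∈ l1} (fun x hx => m1 x hx) (fun x hx => dis x hx)]
    rw [hun]
    exact GA_full hq0 hq'0 hq hq'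
  have stageB : ∀ l1 l2 : List (V × V'), l1.Nodup → l2.Nodup →
      (∀ x ∈ l1, (isSource q x.1 ↔ ¬ isSource q' x.2)) →
      (∀ x ∈ l2, (isSource q x.1 ↔ ¬ isSource q' x.2)) →
      (∀ x ∈ l2, x ∉ l1) →
      ({x | x ∈ l1} ∪ {x | x ∈ l2} : Set (V × V')) =
        {p : V × V' | isSource q p.1 ↔ ¬ isSource q' p.2} →
      l2.foldl quiverMutation (l1.foldl quiverMutation (squareProd q q')) =
        fun p r => squareProd q q' r p := by
    intro l1 l2 nd1 nd2 m1 m2 dis hun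
    have e1 : l1.foldl quiverMutation (squareProd q q') =
        mG (squareProd q q') (fun p r => ((p.1, r.2) : V × V'))
          ((∅ : Set (V × V')) ∪ {x | x ∈ l1}) := by
      conv_lhs => rw [← mG_empty (squareProd q q') (fun p r => ((p.1, r.2) : V × V'))]
      exact mG_fold hB0 hB2 hPB hmed1B hmed2B hpathB l1 nd1 (fun x hx => m1 x hx) ∅
        (Set.empty_subset _) (fun x _ h => h)
    rw [e1, Set.empty_union]
    rw [mG_fold hB0 hB2 hPB hmed1B hmed2B hpathB l2 nd2 (fun x hx => m2 x hx)
      {x | x ∈ l1} (fun x hx => m1 x hx) (fun x hx => dis x hx)]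
    rw [hun]
    exact GB_full hq0 hq'0 hq hq'
  have hmm_char : ∀ l, Enum q q' false false l → ∀ x : V × V',
      x ∈ l ↔ (¬ isSource q x.1 ∧ ¬ isSource q' x.2) := by
    intro l h x
    rw [h.2 x]
    unfold Mclass signClass
    simp
  have hpp_char : ∀ l, Enum q q' true true l → ∀ x : V × V',
      x ∈ l ↔ (isSource q x.1 ∧ isSource q' x.2) := by
    intro l h x
    rw [h.2 x]
    unfold Mclass signClass
    simp
  have hpm_char : ∀ l, Enum q q' true false l → ∀ x : V × V',
      x ∈ l ↔ (isSource q x.1 ∧ ¬ isSource q' x.2) := by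
    intro l h x
    rw [h.2 x]
    unfold Mclass signClass
    simp
  have hmp_char : ∀ l, Enum q q' false true l → ∀ x : V × V',
      x ∈ l ↔ (¬ isSource q x.1 ∧ isSource q' x.2) := by
    intro l h x
    rw [h.2 x]
    unfold Mclass signClass
    simp
  have st1 : ∀ lmm lpp, Enum q q' false false lmm → Enum q q' true true lpp →
      lpp.foldl quiverMutation (lmm.foldl quiverMutation (squareProd q q')) =
        fun p r => squareProd q q' r p := by
    intro lmm lpp h1 h2
    refine stageA lmm lpp h1.1 h2.1 ?_ ?_ ?_ ?_
    · intro x hx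
      obtain ⟨a, b⟩ := (hmm_char lmm h1 x).mp hx
      exact iff_of_false a b
    · intro x hx
      obtain ⟨a, b⟩ := (hpp_char lpp h2 x).mp hx
      exact iff_of_true a b
    · intro x hx hx1
      obtain ⟨a, _⟩ := (hpp_char lpp h2 x).mp hx
      obtain ⟨c, _⟩ := (hmm_char lmm h1 x).mp hx1
      exact c a
    · ext z
      simp only [Set.mem_union, Set.mem_setOf_eq]
      constructor
      · rintro (hz | hz)
        · obtain ⟨a, b⟩ := (hmm_char lmm h1 z).mp hz
          exact iff_of_false a b
        · obtain ⟨a, b⟩ := (hpp_char lpp h2 z).mp hz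
          exact iff_of_true a b
      · intro hz
        by_cases hs : isSource q z.1
        · exact Or.inr ((hpp_char lpp h2 z).mpr ⟨hs, hz.mp hs⟩)
        · exact Or.inl ((hmm_char lmm h1 z).mpr ⟨hs, fun h => hs (hz.mpr h)⟩)
  have st2 : ∀ lpm lmp, Enum q q' true false lpm → Enum q q' false true lmp →
      lmp.foldl quiverMutation (lpm.foldl quiverMutation (squareProd q q')) =
        fun p r => squareProd q q' r p := by
    intro lpm lmp h1 h2
    refine stageB lpm lmp h1.1 h2.1 ?_ ?_ ?_ ?_
    · intro x hx
      obtain ⟨a, b⟩ := (hpm_char lpm h1 x).mp hx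
      exact iff_of_true a b
    · intro x hx
      obtain ⟨a, b⟩ := (hmp_char lmp h2 x).mp hx
      exact iff_of_false a (fun h => h b)
    · intro x hx hx1
      obtain ⟨a, _⟩ := (hmp_char lmp h2 x).mp hx
      obtain ⟨c, _⟩ := (hpm_char lpm h1 x).mp hx1
      exact a c
    · ext z
      simp only [Set.mem_union, Set.mem_setOf_eq]
      constructor
      · rintro (hz | hz)
        · obtain ⟨a, b⟩ := (hpm_char lpm h1 z).mp hz
          exact iff_of_true a b
        · obtain ⟨a, b⟩ := (hmp_char lmp h2 z).mp hz
          exact iff_of_false a (fun h => h b)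
      · intro hz
        by_cases hs : isSource q z.1
        · exact Or.inl ((hpm_char lpm h1 z).mpr ⟨hs, hz.mp hs⟩)
        · exact Or.inr ((hmp_char lmp h2 z).mpr ⟨hs, by
            by_contra h
            exact hs (hz.mpr h)⟩)
  refine ⟨st1, st2, ?_⟩
  intro lpm lmp lpp lmm h1 h2 h3 h4
  rw [st2 lpm lmp h1 h2]
  rw [foldl_op lpp (squareProd q q')]
  rw [foldl_op lmm (List.foldl quiverMutation (squareProd q q') lpp)]
  have hio : lmm.foldl quiverMutation (lpp.foldl quiverMutation (squareProd q q')) =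
      fun p r => squareProd q q' r p := by
    refine stageA lpp lmm h3.1 h4.1 ?_ ?_ ?_ ?_
    · intro x hx
      obtain ⟨a, b⟩ := (hpp_char lpp h3 x).mp hx
      exact iff_of_true a b
    · intro x hx
      obtain ⟨a, b⟩ := (hmm_char lmm h4 x).mp hx
      exact iff_of_false a b
    · intro x hx hx1
      obtain ⟨a, _⟩ := (hmm_char lmm h4 x).mp hx
      obtain ⟨c, _⟩ := (hpp_char lpp h3 x).mp hx1
      exact a c
    · ext z
      simp only [Set.mem_union, Set.mem_setOf_eq]
      constructor
      · rintro (hz | hz)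
        · obtain ⟨a, b⟩ := (hpp_char lpp h3 z).mp hz
          exact iff_of_true a b
        · obtain ⟨a, b⟩ := (hmm_char lmm h4 z).mp hz
          exact iff_of_false a b
      · intro hz
        by_cases hs : isSource q z.1
        · exact Or.inl ((hpp_char lpp h3 z).mpr ⟨hs, hz.mp hs⟩)
        · exact Or.inr ((hmm_char lmm h4 z).mpr ⟨hs, fun h => hs (hz.mpr h)⟩)
  rw [hio]
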